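/- Every bipartite TRVG with n vertices has at most 2n − 2 edges. -/

import Mathlib

structure Rect where
  x1 : ℝ
  x2 : ℝ
  y1 : ℝ
  y2 : ℝ
  hx : x1 < x2
  hy : y1 < y2

def Rect.pts (R : Rect) : Set (ℝ × ℝ) := Set.Icc R.x1 R.x2 ×ˢ Set.Icc R.y1 R.y2

def seesV (R S : Rect) : Prop := (Set.Ioo R.x1 R.x2 ∩ Set.Ioo S.x1 S.x2).Nonempty

def seesH (R S : Rect) : Prop := (Set.Ioo R.y1 R.y2 ∩ Set.Ioo S.y1 S.y2).Nonempty

def sees (R S : Rect) : Prop := seesV R S ∨ seesH R S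

def IsTRVG {V : Type*} (G : SimpleGraph V) : Prop :=
  ∃ f : V → Rect,
    (∀ u v : V, u ≠ v → Disjoint (f u).pts (f v).pts) ∧
    (∀ u v : V, u ≠ v → (G.Adj u v ↔ sees (f u) (f v)))

/-- The overlap graph of a family of open intervals. -/
def ovGraph {V : Type*} (l r : V → ℝ) : SimpleGraph V where
  Adj u v := u ≠ v ∧ (Set.Ioo (l u) (r u) ∩ Set.Ioo (l v) (r v)).Nonempty
  symm := by
    refine ⟨fun u v hv => ?_⟩
    exact ⟨hv.1.symm, by rw [Set.inter_comm]; exact hv.2⟩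
  loopless := by refine ⟨fun u hu => ?_⟩; exact hu.1 rfl

lemma ov_bound {V : Type*} [Fintype V] (l r : V → ℝ) (part : V → Fin 2)
    (hp : ∀ u v : V, (ovGraph l r).Adj u v → part u ≠ part v) :
    (ovGraph l r).edgeSet.ncard ≤ Fintype.card V - 1 := by
  rcases isEmpty_or_nonempty V with hV | hV
  · have : (ovGraph l r).edgeSet = ∅ := by
      ext e
      induction e using Sym2.ind with
      | _ u v => exact (hV.elim u)
    simp [this]
  · classical
    set ι := Fintype.equivFin V with hι
    set key : V → ℝ ×ₗ ℕ := fun v => toLex (r v, (ι v : ℕ)) with hkey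
    have keyinj : Function.Injective key := by
      intro u v huv
      have : (r u, (ι u : ℕ)) = (r v, (ι v : ℕ)) := by
        exact toLex.injective huv
      have h2 : (ι u : ℕ) = (ι v : ℕ) := congrArg Prod.snd this
      exact ι.injective (Fin.ext h2)
    have keyr : ∀ u v : V, key u < key v → r u ≤ r v := by
      intro u v huv
      rw [hkey] at huv
      rcases (Prod.Lex.lt_iff).mp huv with h | ⟨h, _⟩
      · exact le_of_lt h
      · exact le_of_eq h
    obtain ⟨vm, -, hvm⟩ := Finset.exists_max_image Finset.univ key Finset.univ_nonempty
    -- the "smaller endpoint" map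
    have msymm : ∀ u v : V, (if key u ≤ key v then u else v) = (if key v ≤ key u then v else u) := by
      intro u v
      rcases le_or_gt (key u) (key v) with h | h
      · rcases le_or_gt (key v) (key u) with h' | h'
        · have : u = v := keyinj (le_antisymm h h')
          simp [this]
        · simp [h, not_le.mpr h']
      · simp [not_le.mpr h, le_of_lt h]
    set F : Sym2 V → V := Sym2.lift ⟨fun u v => if key u ≤ key v then u else v, msymm⟩ with hF
    have hFmk : ∀ u v : V, key u < key v → F s(u, v) = u := by
      intro u v huv
      simp [hF, Sym2.lift_mk, le_of_lt huv]
    have hrep : ∀ e ∈ (ovGraph l r).edgeSet, ∃ u v : V,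
        e = s(u, v) ∧ (ovGraph l r).Adj u v ∧ key u < key v := by
      intro e he
      induction e using Sym2.ind with
      | _ u v =>
        rw [SimpleGraph.mem_edgeSet] at he
        rcases (keyinj.ne he.1).lt_or_gt with h | h
        · exact ⟨u, v, rfl, he, h⟩
        · exact ⟨v, u, Sym2.eq_swap, he.symm, h⟩
    -- triangle argument: F is injective on edges
    have hinj : Set.InjOn F (ovGraph l r).edgeSet := by
      intro e1 h1 e2 h2 hFe
      obtain ⟨u1, v1, he1, ha1, hk1⟩ := hrep e1 h1
      obtain ⟨u2, v2, he2, ha2, hk2⟩ := hrep e2 h2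
      rw [he1, he2, hFmk u1 v1 hk1, hFmk u2 v2 hk2] at hFe
      subst hFe
      by_cases hvv : v1 = v2
      · rw [he1, he2, hvv]
      · exfalso
        -- v1 and v2 both overlap u1 and have larger key, so they overlap each other
        obtain ⟨t1, ht1⟩ := ha1.2
        obtain ⟨t2, ht2⟩ := ha2.2
        have hr1 : r u1 ≤ r v1 := keyr _ _ hk1
        have hr2 : r u1 ≤ r v2 := keyr _ _ hk2
        have hl1 : l v1 < r u1 := lt_of_le_of_lt (le_of_lt ht1.2.1) ht1.1.2
        have hl2 : l v2 < r u1 := lt_of_le_of_lt (le_of_lt ht2.2.1) ht2.1.2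
        set M := max (l v1) (l v2) with hM
        have hMlt : M < r u1 := max_lt hl1 hl2
        set t := (M + r u1) / 2 with ht
        have htM : M < t := by rw [ht]; linarith
        have htr : t < r u1 := by rw [ht]; linarith
        have hov12 : (ovGraph l r).Adj v1 v2 := by
          refine ⟨hvv, t, ⟨lt_of_le_of_lt (le_max_left _ _) htM, lt_of_lt_of_le htr hr1⟩,
            ⟨lt_of_le_of_lt (le_max_right _ _) htM, lt_of_lt_of_le htr hr2⟩⟩
        have p1 := hp _ _ ha1
        have p2 := hp _ _ ha2
        have p3 := hp _ _ hov12
        have b1 := (part u1).isLt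
        have b2 := (part v1).isLt
        have b3 := (part v2).isLt
        rw [Fin.ne_iff_vne] at p1 p2 p3
        omega
    -- F never hits the key-maximal vertex
    have hsub : F '' (ovGraph l r).edgeSet ⊆ {vm}ᶜ := by
      rintro x ⟨e, he, rfl⟩
      obtain ⟨u, v, heq, ha, hk⟩ := hrep e he
      rw [heq, hFmk u v hk]
      intro hx
      simp only [Set.mem_singleton_iff] at hx
      have := hvm v (Finset.mem_univ v)
      rw [hx] at hk
      exact absurd this (not_le.mpr hk)
    calc (ovGraph l r).edgeSet.ncard = (F '' (ovGraph l r).edgeSet).ncard :=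
          (Set.ncard_image_of_injOn hinj).symm
      _ ≤ ({vm}ᶜ : Set V).ncard := Set.ncard_le_ncard hsub (Set.toFinite _)
      _ ≤ Fintype.card V - 1 := by
          have h1 : ({vm} : Set V).ncard + ({vm}ᶜ : Set V).ncard = Nat.card V :=
            Set.ncard_add_ncard_compl _
          have h2 : ({vm} : Set V).ncard = 1 := Set.ncard_singleton _
          have h3 : Nat.card V = Fintype.card V := Nat.card_eq_fintype_card
          omega

/-- Every bipartite TRVG with n vertices has at most 2n − 2 edges. -/
theorem stmt6 {V : Type*} [Fintype V] (G : SimpleGraph V) (n : ℕ)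
    (hn : Fintype.card V = n)
    (part : V → Fin 2) (hpart : ∀ u v : V, G.Adj u v → part u ≠ part v)
    (h : IsTRVG G) :
    G.edgeSet.ncard ≤ 2 * n - 2 := by
  obtain ⟨f, -, hadj⟩ := h
  set Gx := ovGraph (fun v => (f v).x1) (fun v => (f v).x2) with hGx
  set Gy := ovGraph (fun v => (f v).y1) (fun v => (f v).y2) with hGy
  have hpx : ∀ u v : V, Gx.Adj u v → part u ≠ part v := by
    intro u v ⟨hne, hov⟩
    exact hpart u v ((hadj u v hne).mpr (Or.inl hov))
  have hpy : ∀ u v : V, Gy.Adj u v → part u ≠ part v := by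
    intro u v ⟨hne, hov⟩
    exact hpart u v ((hadj u v hne).mpr (Or.inr hov))
  have hsub : G.edgeSet ⊆ Gx.edgeSet ∪ Gy.edgeSet := by
    intro e he
    induction e using Sym2.ind with
    | _ u v =>
      rw [SimpleGraph.mem_edgeSet] at he
      have hne := he.ne
      have hs : seesV (f u) (f v) ∨ seesH (f u) (f v) := (hadj u v hne).mp he
      rcases hs with hx | hy
      · exact Or.inl ((Gx.mem_edgeSet).mpr ⟨hne, hx⟩)
      · exact Or.inr ((Gy.mem_edgeSet).mpr ⟨hne, hy⟩)
  have hx : Gx.edgeSet.ncard ≤ Fintype.card V - 1 := ov_bound _ _ part hpx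
  have hy : Gy.edgeSet.ncard ≤ Fintype.card V - 1 := ov_bound _ _ part hpy
  have h1 : G.edgeSet.ncard ≤ (Gx.edgeSet ∪ Gy.edgeSet).ncard :=
    Set.ncard_le_ncard hsub (Set.toFinite _)
  have h2 : (Gx.edgeSet ∪ Gy.edgeSet).ncard ≤ Gx.edgeSet.ncard + Gy.edgeSet.ncard :=
    Set.ncard_union_le _ _
  subst hn
  omega
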